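/- For any t ∈ ℝ, the map Φ_t : SE₂(3) → SE₂(3) defined by Φ_t([[R, V, X],[0₁ₓ₃, 1, 0],[0₁ₓ₃, 0, 1]]) = [[R, V, X + tV],[0₁ₓ₃, 1, 0],[0₁ₓ₃, 0, 1]] is a group automorphism: Φ_t(T₁ T₂) = Φ_t(T₁) Φ_t(T₂) for all T₁, T₂ ∈ SE₂(3). -/
import Mathlib


open Matrix

noncomputable section

abbrev M3 := Matrix (Fin 3) (Fin 3) ℝ
abbrev M5 := Matrix (Fin 5) (Fin 5) ℝ
abbrev V3 := Fin 3 → ℝ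
abbrev V9 := V3 × V3 × V3

/-- Skew-symmetric cross-product matrix `(ω)ₓ`. -/
def skew (ω : V3) : M3 := !![0, -ω 2, ω 1; ω 2, 0, -ω 0; -ω 1, ω 0, 0]

/-- 5×5 block matrix `[[A, v, x],[0₁ₓ₃, d, 0],[0₁ₓ₃, 0, e]]`. -/
def blk (A : M3) (v x : V3) (d e : ℝ) : M5 :=
  !![A 0 0, A 0 1, A 0 2, v 0, x 0;
     A 1 0, A 1 1, A 1 2, v 1, x 1;
     A 2 0, A 2 1, A 2 2, v 2, x 2;
     0, 0, 0, d, 0;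
     0, 0, 0, 0, e]

/-- Element of `SE₂(3)` built from rotation `R`, velocity `V`, position `X`. -/
def se23 (R : M3) (V X : V3) : M5 := blk R V X 1 1

/-- The hat map `ξ^∧` of `ξ = (ω, v, x) ∈ ℝ⁹`. -/
def hat (ω v x : V3) : M5 := blk (skew ω) v x 0 0

def hat9 (ξ : V9) : M5 := hat ξ.1 ξ.2.1 ξ.2.2

def IsSO3 (R : M3) : Prop := Rᵀ * R = 1 ∧ R.det = 1

def IsSE23 (T : M5) : Prop := ∃ R V X, IsSO3 R ∧ T = se23 R V X

/-- Rotation block of a 5×5 matrix. -/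
def Rof (T : M5) : M3 := Matrix.of fun i j => T (Fin.castLE (by omega) i) (Fin.castLE (by omega) j)

/-- Velocity column of a 5×5 matrix. -/
def Vof (T : M5) : V3 := fun i => T (Fin.castLE (by omega) i) 3

/-- Position column of a 5×5 matrix. -/
def Xof (T : M5) : V3 := fun i => T (Fin.castLE (by omega) i) 4

/-- Adjoint of `T ∈ SE₂(3)` acting on `ξ = (ω, v, x) ∈ ℝ⁹`:
  `[[R, 0, 0],[(V)ₓR, R, 0],[(X)ₓR, 0, R]]`. -/
def Ad (T : M5) (ξ : V9) : V9 :=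
  (Rof T *ᵥ ξ.1,
   (skew (Vof T) * Rof T) *ᵥ ξ.1 + Rof T *ᵥ ξ.2.1,
   (skew (Xof T) * Rof T) *ᵥ ξ.1 + Rof T *ᵥ ξ.2.2)

/-- `f(T)` : places the velocity column of `T` in the position column. -/
def fmap (T : M5) : M5 := blk 0 0 (Vof T) 0 0

/-- `Φ_t` : maps `[[R,V,X],...]` to `[[R,V,X+tV],...]` (acting on the top three rows). -/
def Phi (t : ℝ) (T : M5) : M5 :=
  Matrix.of fun i j => if (i : ℕ) < 3 ∧ (j : ℕ) = 4 then T i j + t * T i 3 else T i j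

/-- The linear map `F : (ω,v,x) ↦ (ω, v, x + Δt·v)`. -/
def Fmap (Δt : ℝ) (ξ : V9) : V9 := (ξ.1, ξ.2.1, ξ.2.2 + Δt • ξ.2.1)

set_option maxHeartbeats 1000000 in
lemma se23_mul (R₁ R₂ : M3) (V₁ X₁ V₂ X₂ : V3) :
    se23 R₁ V₁ X₁ * se23 R₂ V₂ X₂ =
      se23 (R₁ * R₂) (R₁ *ᵥ V₂ + V₁) (R₁ *ᵥ X₂ + X₁) := by
  ext i j
  fin_cases i <;> fin_cases j <;>
    simp [se23, blk, Matrix.mul_apply, Matrix.mulVec, dotProduct,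
      Fin.sum_univ_five, Fin.sum_univ_three, Matrix.vecHead, Matrix.vecTail] <;> ring

set_option maxHeartbeats 1000000 in
lemma Phi_se23 (t : ℝ) (R : M3) (V X : V3) :
    Phi t (se23 R V X) = se23 R V (X + t • V) := by
  ext i j
  fin_cases i <;> fin_cases j <;>
    simp (config := { decide := true }) [Phi, se23, blk]


/-- `Φ_t` is a group automorphism of `SE₂(3)`. -/
theorem stmt_10 (t : ℝ) (T₁ T₂ : M5) (h₁ : IsSE23 T₁) (h₂ : IsSE23 T₂) :
    Phi t (T₁ * T₂) = Phi t T₁ * Phi t T₂ := by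
  obtain ⟨R₁, V₁, X₁, -, rfl⟩ := h₁
  obtain ⟨R₂, V₂, X₂, -, rfl⟩ := h₂
  rw [se23_mul, Phi_se23, Phi_se23, Phi_se23, se23_mul]
  congr 1
  ext i
  simp [Matrix.mulVec_add, Matrix.mulVec_smul, Matrix.mulVec, dotProduct,
    Fin.sum_univ_three]
  ring
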